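/- arXiv:2106.10521 — 3 statements merged into one kernel-verified Lean document; each statement's English description precedes it below -/
import Mathlib

section
/- All basic zone tariffs with respect to a price function P : ℕ_{≥1} → ℝ_{≥0} satisfy the no-stopover property if and only if P(k) ≤ P(i) + P(k−i+1) for all k ≥ 1 and all i ∈ {1,...,k}. -/
open scoped Classical

/-- A path in a graph given by adjacency relation `adj`: a nonempty list of
consecutively adjacent nodes. -/
def IsPath {V : Type*} (adj : V → V → Prop) (W : List V) : Prop :=
  W ≠ [] ∧ W.Chain' adj

/-- An `x`-`y`-path. -/
def IsXYPath {V : Type*} (adj : V → V → Prop) (x y : V) (W : List V) : Prop :=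
  IsPath adj W ∧ W.head? = some x ∧ W.getLast? = some y

/-- `W` decomposes as the concatenation `W₁ + W₂` (the last node of `W₁` is the
first node of `W₂`). -/
def Splits {V : Type*} (W W₁ W₂ : List V) : Prop :=
  W₁ ≠ [] ∧ W₂ ≠ [] ∧ W₁.getLast? = W₂.head? ∧ W = W₁ ++ W₂.tail

/-- `W` splits at an intermediate node into `W₁ + W₂` (both parts have at least
two nodes). -/
def SplitsAt {V : Type*} (W W₁ W₂ : List V) : Prop :=
  2 ≤ W₁.length ∧ 2 ≤ W₂.length ∧ W₁.getLast? = W₂.head? ∧ W = W₁ ++ W₂.tail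

/-- The no-stopover property: splitting a path at an intermediate node never
decreases the total price. -/
def NoStopover {V : Type*} (adj : V → V → Prop) (p : List V → ℝ) : Prop :=
  ∀ W W₁ W₂ : List V, IsPath adj W → IsPath adj W₁ → IsPath adj W₂ →
    SplitsAt W W₁ W₂ → p W ≤ p W₁ + p W₂

/-- The no-elongation property: removing the last node of a path never
increases the price. -/
def NoElongation {V : Type*} (adj : V → V → Prop) (p : List V → ℝ) : Prop :=
  ∀ W : List V, IsPath adj W → 2 ≤ W.length → p W.dropLast ≤ p W

/-- Number of zone borders crossed by a path (basic zone tariff). -/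
noncomputable def zoneBorders {V Z : Type*} (zone : V → Z) : List V → ℕ
  | x :: y :: rest => (if zone x = zone y then 0 else 1) + zoneBorders zone (y :: rest)
  | _ => 0

lemma zoneBorders_split {V Z : Type*} (zone : V → Z) :
    ∀ (W₁ W₂ : List V), W₁ ≠ [] → W₂ ≠ [] → W₁.getLast? = W₂.head? →
    zoneBorders zone (W₁ ++ W₂.tail) = zoneBorders zone W₁ + zoneBorders zone W₂
  | [], _, h, _, _ => absurd rfl h
  | [a], W₂, _, h₂, hlast => by
      match W₂, h₂ with
      | b :: t, _ =>
        simp only [List.getLast?_singleton, List.head?_cons, Option.some.injEq] at hlast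
        subst hlast
        show zoneBorders zone (a :: t) = zoneBorders zone [a] + zoneBorders zone (a :: t)
        show zoneBorders zone (a :: t) = 0 + zoneBorders zone (a :: t)
        omega
  | a :: b :: l, W₂, _, h₂, hlast => by
      have ih := zoneBorders_split zone (b :: l) W₂ (by simp) h₂
        (by simpa using hlast)
      show (if zone a = zone b then 0 else 1) + zoneBorders zone ((b :: l) ++ W₂.tail)
          = ((if zone a = zone b then 0 else 1) + zoneBorders zone (b :: l)) + zoneBorders zone W₂
      rw [ih]
      omega

lemma chain'_range' : ∀ (n s : ℕ), List.Chain' (fun a b => b = a + 1) (List.range' s n)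
  | 0, s => by simp [List.Chain']
  | 1, s => by simp [List.Chain']
  | (n+2), s => by
      rw [List.range'_succ]
      refine List.isChain_cons.2 ⟨?_, chain'_range' (n+1) (s+1)⟩
      intro b hb
      rw [List.range'_succ] at hb
      simp at hb
      omega

lemma zb_range' : ∀ (n s : ℕ), zoneBorders (id : ℕ → ℕ) (List.range' s (n+1)) = n
  | 0, s => by simp [List.range'_succ, zoneBorders]
  | (n+1), s => by
      have ih := zb_range' n (s+1)
      rw [List.range'_succ, List.range'_succ]
      simp only [zoneBorders]
      rw [← List.range'_succ, ih]
      simp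
      omega

/-- All basic zone tariffs w.r.t. a price function `P : ℕ≥1 → ℝ≥0` (price of a
path `W` is `P(z(W))` with `z(W) = 1 +` number of zone borders crossed) satisfy
the no-stopover property if and only if `P(k) ≤ P(i) + P(k−i+1)` for all
`k ≥ 1` and `i ∈ {1,…,k}`. -/
theorem basic_zone_no_stopover_iff (P : ℕ → ℝ) (hP : ∀ k, 1 ≤ k → 0 ≤ P k) :
    (∀ (V Z : Type) (adj : V → V → Prop) (zone : V → Z),
        NoStopover adj (fun W => P (1 + zoneBorders zone W))) ↔
      (∀ k i : ℕ, 1 ≤ k → 1 ≤ i → i ≤ k → P k ≤ P i + P (k - i + 1)) := by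
  constructor
  · intro H k i hk hi hik
    rcases eq_or_lt_of_le hi with h1 | h1
    · -- i = 1
      have : k - 1 + 1 = k := by omega
      rw [← h1, this]
      have := hP 1 (le_refl 1)
      linarith
    rcases eq_or_lt_of_le hik with h2 | h2
    · -- i = k
      subst h2
      have : i - i + 1 = 1 := by omega
      rw [this]
      have := hP 1 (le_refl 1)
      linarith
    -- 2 ≤ i ≤ k - 1
    have h2i : 2 ≤ i := h1
    have hik1 : i + 1 ≤ k := h2
    have key := H ℕ ℕ (fun a b => b = a + 1) id (List.range' 0 k)
      (List.range' 0 i) (List.range' (i-1) (k-i+1))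
      ⟨by simp; omega, chain'_range' k 0⟩
      ⟨by simp; omega, chain'_range' i 0⟩
      ⟨by simp, chain'_range' (k-i+1) (i-1)⟩
      ?_
    · have e1 : zoneBorders (id : ℕ → ℕ) (List.range' 0 k) = k - 1 := by
        have := zb_range' (k-1) 0
        rw [show k - 1 + 1 = k by omega] at this
        exact this
      have e2 : zoneBorders (id : ℕ → ℕ) (List.range' 0 i) = i - 1 := by
        have := zb_range' (i-1) 0
        rw [show i - 1 + 1 = i by omega] at this
        exact this
      have e3 : zoneBorders (id : ℕ → ℕ) (List.range' (i-1) (k-i+1)) = k - i := by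
        exact zb_range' (k-i) (i-1)
      simp only [e1, e2, e3] at key
      rw [show 1 + (k-1) = k by omega, show 1 + (i-1) = i by omega,
        show 1 + (k-i) = k - i + 1 by omega] at key
      exact key
    · refine ⟨by simp; omega, by simp; omega, ?_, ?_⟩
      · rw [List.getLast?_range', List.range'_succ]
        simp
        omega
      · rw [show k - i + 1 = (k-i) + 1 from rfl, List.range'_succ]
        simp only [List.tail_cons]
        rw [show i - 1 + 1 = i by omega]
        have happ := List.range'_append (s := 0) (m := i) (n := k-i) (step := 1)
        simp only [Nat.zero_add, Nat.one_mul] at happ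
        rw [happ, show i + (k - i) = k by omega]
  · intro H V Z adj zone W W₁ W₂ _ _ _ ⟨hl1, hl2, hlast, hW⟩
    have h1 : W₁ ≠ [] := by intro h; simp [h] at hl1
    have h2 : W₂ ≠ [] := by intro h; simp [h] at hl2
    have hz : zoneBorders zone W = zoneBorders zone W₁ + zoneBorders zone W₂ := by
      rw [hW]; exact zoneBorders_split zone W₁ W₂ h1 h2 hlast
    simp only [hz]
    have := H (1 + (zoneBorders zone W₁ + zoneBorders zone W₂)) (1 + zoneBorders zone W₁)
      (by omega) (by omega) (by omega)
    rw [show 1 + (zoneBorders zone W₁ + zoneBorders zone W₂) - (1 + zoneBorders zone W₁) + 1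
      = 1 + zoneBorders zone W₂ by omega] at this
    exact this
end

section
/- Fix an increasing price function P and a metropolitan price P_M. All zone tariffs with metropolitan zone with respect to P and P_M satisfy the no-elongation property if and only if P_M ≤ P(2). -/
open scoped Classical

/-- A path is included in the metropolitan zone `metro` (a set of zones) if
every node on it lies in a metropolitan zone. -/
def InMetro {V Z : Type*} (zone : V → Z) (metro : Set Z) (W : List V) : Prop :=
  ∀ v ∈ W, zone v ∈ metro

/-- Price in a zone tariff with metropolitan zone: a path included in the
metropolitan zone costs `PM`; any other path costs `P(z(W))`. -/
noncomputable def metroPrice {V Z : Type*} (P : ℕ → ℝ) (PM : ℝ) (zone : V → Z)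
    (metro : Set Z) (W : List V) : ℝ :=
  if InMetro zone metro W then PM else P (1 + zoneBorders zone W)

lemma zoneBorders_cons_cons {V Z : Type*} (zone : V → Z) (x y : V) (l : List V) :
    zoneBorders zone (x :: y :: l) =
      (if zone x = zone y then 0 else 1) + zoneBorders zone (y :: l) := rfl

lemma zoneBorders_dropLast_le {V Z : Type*} (zone : V → Z) (l : List V) :
    zoneBorders zone l.dropLast ≤ zoneBorders zone l := by
  induction l with
  | nil => simp [zoneBorders]
  | cons x l ih =>
    cases l with
    | nil => simp [zoneBorders]
    | cons y rest =>
      cases rest with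
      | nil => simp [zoneBorders]
      | cons z r =>
        have h1 : (x :: y :: z :: r).dropLast = x :: (y :: z :: r).dropLast := rfl
        have h2 : (y :: z :: r).dropLast = y :: (z :: r).dropLast := rfl
        rw [h1, h2, zoneBorders_cons_cons, ← h2, zoneBorders_cons_cons]
        exact Nat.add_le_add_left ih _

lemma zone_eq_of_zoneBorders_zero {V Z : Type*} (zone : V → Z) :
    ∀ (x : V) (l : List V), zoneBorders zone (x :: l) = 0 →
      ∀ v ∈ x :: l, zone v = zone x := by
  intro x l
  induction l generalizing x with
  | nil =>
    intro _ v hv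
    simp only [List.mem_singleton] at hv
    subst hv; rfl
  | cons y rest ih =>
    intro h v hv
    rw [zoneBorders_cons_cons] at h
    obtain ⟨h1, h2⟩ := Nat.add_eq_zero.mp h
    have hxy : zone x = zone y := by
      by_contra hne
      simp [hne] at h1
    rcases List.mem_cons.mp hv with rfl | hv'
    · rfl
    · rw [hxy]; exact ih y h2 v hv'

/-- Fix an increasing price function `P` and a metropolitan price `PM`. All
zone tariffs with metropolitan zone w.r.t. `P` and `PM` satisfy the
no-elongation property if and only if `PM ≤ P(2)`. -/
theorem metro_zone_no_elongation_iff (P : ℕ → ℝ) (PM : ℝ)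
    (hmono : ∀ k l : ℕ, 1 ≤ k → k ≤ l → P k ≤ P l) :
    (∀ (V Z : Type) (adj : V → V → Prop) (zone : V → Z) (metro : Set Z),
        NoElongation adj (metroPrice P PM zone metro)) ↔ PM ≤ P 2 := by
  constructor
  · intro h
    have key := h ℕ ℕ (fun _ _ => True) id {0} [0, 1]
      ⟨by simp, by simp [List.Chain']⟩ (by simp)
    have hm1 : InMetro id ({0} : Set ℕ) [0] := by
      intro v hv
      simp only [List.mem_singleton] at hv
      simp [hv]
    have hm2 : ¬ InMetro id ({0} : Set ℕ) [0, 1] := by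
      intro hm
      have := hm 1 (by simp)
      simp at this
    have hdl : ([0, 1] : List ℕ).dropLast = [0] := rfl
    rw [hdl, metroPrice, metroPrice, if_pos hm1, if_neg hm2] at key
    have hzb : zoneBorders id ([0, 1] : List ℕ) = 1 := by
      simp [zoneBorders]
    rwa [hzb] at key
  · intro hPM V Z adj zone metro W hW hlen
    by_cases hWm : InMetro zone metro W
    · have hdm : InMetro zone metro W.dropLast :=
        fun v hv => hWm v (List.dropLast_subset W hv)
      rw [metroPrice, metroPrice, if_pos hdm, if_pos hWm]
    · by_cases hdm : InMetro zone metro W.dropLast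
      · rw [metroPrice, metroPrice, if_pos hdm, if_neg hWm]
        obtain ⟨a, b, l, rfl⟩ : ∃ a b l, W = a :: b :: l := by
          match W, hlen with
          | a :: b :: l, _ => exact ⟨a, b, l, rfl⟩
        have ha : zone a ∈ metro := by
          apply hdm a
          rw [show (a :: b :: l).dropLast = a :: (b :: l).dropLast from rfl]
          exact List.mem_cons_self
        have hzb : zoneBorders zone (a :: b :: l) ≠ 0 := by
          intro h0
          apply hWm
          intro v hv
          rw [zone_eq_of_zoneBorders_zero zone a (b :: l) h0 v hv]
          exact ha
        calc PM ≤ P 2 := hPM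
          _ ≤ P (1 + zoneBorders zone (a :: b :: l)) :=
            hmono 2 _ (by omega) (by omega)
      · rw [metroPrice, metroPrice, if_neg hdm, if_neg hWm]
        exact hmono _ _ (by omega)
          (by have := zoneBorders_dropLast_le zone W; omega)
end

section
/- If two fare systems p_1 and p_2 on the same graph both satisfy the no-elongation property, then the combined fare system p(W) = min{p_1(W), p_2(W)} also satisfies the no-elongation property. In contrast, the analogous statement for the no-stopover property is false: there exist fare systems p_1, p_2 each satisfying the no-stopover property whose combination does not. -/
open scoped Classical

/-- Endpoint-based fare: a "metric-like" price depending only on the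
endpoints of the path. -/
noncomputable def fEnd (x z : Fin 3) : ℝ :=
  if x = z then 0 else if (x : ℕ) + (z : ℕ) = 1 then 1/2 else 10

lemma fEnd_nonneg (x z : Fin 3) : 0 ≤ fEnd x z := by
  unfold fEnd; split_ifs <;> norm_num

lemma fEnd_triangle (x y z : Fin 3) : fEnd x z ≤ fEnd x y + fEnd y z := by
  fin_cases x <;> fin_cases y <;> fin_cases z <;> simp [fEnd] <;> norm_num

lemma headI_append_of_ne_nil {α : Type*} [Inhabited α] (W : List α) (h : W ≠ [])
    (t : List α) : (W ++ t).headI = W.headI := by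
  cases W with
  | nil => simp at h
  | cons a l => simp

lemma getLastD_append_of_ne_nil {α : Type*} [Inhabited α] (s t : List α) (h : t ≠ []) :
    (s ++ t).getLastD default = t.getLastD default := by
  obtain ⟨x, hx⟩ := List.getLast?_isSome.mpr h |> Option.isSome_iff_exists.mp
  simp [List.getLastD_eq_getLast?, List.getLast?_append, hx]

lemma getLastD_cons_of_ne_nil {α : Type*} [Inhabited α] (x : α) (t : List α) (h : t ≠ []) :
    ((x :: t).getLastD default) = t.getLastD default := by
  cases t with
  | nil => simp at h
  | cons a l => simp [List.getLastD_cons]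

/-- If two fare systems both satisfy the no-elongation property, then their
combined fare system `p(W) = min {p₁(W), p₂(W)}` satisfies it as well; in
contrast, there exist two fare systems each satisfying the no-stopover
property whose combined fare system does not. -/

theorem combined_fare_system_properties :
    (∀ (V : Type) (adj : V → V → Prop) (p₁ p₂ : List V → ℝ),
        NoElongation adj p₁ → NoElongation adj p₂ →
        NoElongation adj (fun W => min (p₁ W) (p₂ W))) ∧
    (∃ (V : Type) (adj : V → V → Prop) (p₁ p₂ : List V → ℝ),
        (∀ W, IsPath adj W → 0 ≤ p₁ W) ∧ (∀ W, IsPath adj W → 0 ≤ p₂ W) ∧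
        NoStopover adj p₁ ∧ NoStopover adj p₂ ∧
        ¬ NoStopover adj (fun W => min (p₁ W) (p₂ W))) := by
  constructor
  · intro V adj p₁ p₂ h₁ h₂ W hW hlen
    exact le_min ((min_le_left _ _).trans (h₁ W hW hlen))
      ((min_le_right _ _).trans (h₂ W hW hlen))
  · refine ⟨Fin 3, fun _ _ => True,
      fun W => fEnd W.headI (W.getLastD default),
      fun W => 2 * ((W.length : ℝ) - 1), ?_, ?_, ?_, ?_, ?_⟩
    · intro W _; exact fEnd_nonneg _ _
    · intro W hW
      have h1 : 1 ≤ W.length := List.length_pos_iff.mpr hW.1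
      have : (1 : ℝ) ≤ (W.length : ℝ) := by exact_mod_cast h1
      dsimp only
      linarith
    · -- p₁ satisfies no-stopover: triangle inequality for endpoints
      intro W W₁ W₂ _ _ _ hS
      obtain ⟨hl₁, hl₂, hmid, hW⟩ := hS
      have h₁ne : W₁ ≠ [] := by intro h; simp [h] at hl₁
      have h₂ne : W₂ ≠ [] := by intro h; simp [h] at hl₂
      have htne : W₂.tail ≠ [] := by
        intro h
        have := List.length_tail (l := W₂)
        rw [h] at this
        simp at this
        omega
      -- head of W = head of W₁
      have hhead : W.headI = W₁.headI := by
        rw [hW]; exact headI_append_of_ne_nil W₁ h₁ne _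
      -- last of W = last of W₂
      have hlast : W.getLastD default = W₂.getLastD default := by
        rw [hW, getLastD_append_of_ne_nil _ _ htne]
        cases W₂ with
        | nil => simp at h₂ne
        | cons a l =>
          have hlne : l ≠ [] := by
            intro h; subst h; simp at htne
          simp only [List.tail_cons]
          exact (getLastD_cons_of_ne_nil a l hlne).symm
      -- middle node
      have hmid' : W₁.getLastD default = W₂.headI := by
        obtain ⟨y, hy⟩ := List.isSome_head?.mpr h₂ne |> Option.isSome_iff_exists.mp
        have hy' : W₁.getLast? = some y := by rw [hmid, hy]
        have : W₂.headI = y := by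
          cases W₂ with
          | nil => simp at h₂ne
          | cons a l => simp_all
        rw [this, List.getLastD_eq_getLast?, hy']
        rfl
      dsimp only
      rw [hhead, hlast, ← hmid']
      exact fEnd_triangle _ _ _
    · -- p₂ satisfies no-stopover: lengths are additive
      intro W W₁ W₂ _ _ _ hS
      obtain ⟨hl₁, hl₂, hmid, hW⟩ := hS
      have h2 : W₂.tail.length = W₂.length - 1 := List.length_tail (l := W₂)
      have hWlen : W.length = W₁.length + W₂.length - 1 := by
        rw [hW]; simp [h2]; omega
      have h1 : (W.length : ℝ) = (W₁.length : ℝ) + (W₂.length : ℝ) - 1 := by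
        rw [hWlen]
        have h3 : 1 ≤ W₁.length + W₂.length := by omega
        push_cast [Nat.cast_sub h3]
        ring
      dsimp only
      linarith
    · -- the combination violates no-stopover
      intro h
      have hP : ∀ W : List (Fin 3), W ≠ [] → IsPath (fun _ _ => True) W := by
        intro W hne
        refine ⟨hne, ?_⟩
        induction W with
        | nil => exact List.IsChain.nil
        | cons a l ih =>
          cases l with
          | nil => exact List.IsChain.singleton _
          | cons b m => exact List.IsChain.cons_cons trivial (ih (by simp))
      have := h [0, 1, 2] [0, 1] [1, 2] (hP _ (by simp)) (hP _ (by simp)) (hP _ (by simp))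
        ⟨by simp, by simp, by simp, by simp⟩
      simp only [List.headI, List.getLastD, List.length] at this
      norm_num [fEnd, Fin.ext_iff] at this
end
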